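/- For any n ≥ 1, letting N = n+1, the formula [^{M+1} w ∈ w'^N (→ w ≐ w ])^M → w'^{N+N!} ∈ w] (with M = n^{N+N!+1}) is a stratified formula, while the result of replacing w'^N by w'^{N+N!} in it (i.e. pumping the first block of primes up to N+N! primes) is not stratified. -/
import Mathlib


/-- Alphabet of the usual syntax of set theory. -/
inductive Alph : Type
  | lb | rb | imp | all | deq | mem | w | prime | bot
deriving DecidableEq

/-- Well-formed formulae of set theory; variables are naturals (number of primes). -/
inductive Fm : Type
  | bot : Fm
  | eq : ℕ → ℕ → Fm
  | mem : ℕ → ℕ → Fm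
  | imp : Fm → Fm → Fm
  | all : ℕ → Fm → Fm
deriving DecidableEq

/-- The string `w'^n` for the variable with `n` primes. -/
def varStr (n : ℕ) : List Alph := Alph.w :: List.replicate n Alph.prime

/-- The string of symbols of a formula. -/
def Fm.str : Fm → List Alph
  | .bot => [Alph.bot]
  | .eq x y => varStr x ++ [Alph.deq] ++ varStr y
  | .mem x y => varStr x ++ [Alph.mem] ++ varStr y
  | .imp φ ψ => [Alph.lb] ++ φ.str ++ [Alph.imp] ++ ψ.str ++ [Alph.rb]
  | .all x φ => [Alph.lb, Alph.all] ++ varStr x ++ [Alph.rb] ++ φ.str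

/-- Pairs `(x, y)` such that `x ∈ y` occurs as an atomic subformula. -/
def Fm.memPairs : Fm → Finset (ℕ × ℕ)
  | .bot => ∅
  | .eq _ _ => ∅
  | .mem x y => {(x, y)}
  | .imp φ ψ => φ.memPairs ∪ ψ.memPairs
  | .all _ φ => φ.memPairs

/-- Pairs `(x, y)` such that `x ≐ y` occurs as an atomic subformula. -/
def Fm.eqPairs : Fm → Finset (ℕ × ℕ)
  | .bot => ∅
  | .eq x y => {(x, y)}
  | .mem _ _ => ∅
  | .imp φ ψ => φ.eqPairs ∪ ψ.eqPairs
  | .all _ φ => φ.eqPairs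

/-- A formula is stratified if some integer assignment to variables satisfies
`σ x = σ y - 1` for subformulae `x ∈ y` and `σ x = σ y` for subformulae `x ≐ y`. -/
def Fm.Stratified (φ : Fm) : Prop :=
  ∃ σ : ℕ → ℤ, (∀ p ∈ φ.memPairs, σ p.1 = σ p.2 - 1) ∧ (∀ p ∈ φ.eqPairs, σ p.1 = σ p.2)

lemma memIter (k : ℕ) (φ : Fm) :
    ((fun ψ => Fm.imp ψ (Fm.eq 0 0))^[k] φ).memPairs = φ.memPairs := by
  induction k with
  | zero => rfl
  | succ k ih =>
      rw [Function.iterate_succ_apply']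
      simpa [Fm.memPairs] using ih

lemma eqIter (k : ℕ) (φ : Fm) :
    ((fun ψ => Fm.imp ψ (Fm.eq 0 0))^[k] φ).eqPairs ⊆ φ.eqPairs ∪ {((0:ℕ), (0:ℕ))} := by
  induction k with
  | zero => exact Finset.subset_union_left
  | succ k ih =>
      rw [Function.iterate_succ_apply']
      intro p hp
      simp only [Fm.eqPairs, Finset.mem_union] at hp
      rcases hp with hp | hp
      · exact ih hp
      · exact Finset.mem_union_right _ hp

/-- For `n ≥ 1`, with `N = n + 1` and `M = n ^ (N + N! + 1)`, the formula
`[^{M+1} w ∈ w'^N (→ w ≐ w ])^M → w'^{N+N!} ∈ w]` is stratified, while the result of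
pumping its first block of primes from `N` up to `N + N!` is not stratified. -/
theorem pumped_formula_not_stratified (n : ℕ) (hn : 1 ≤ n) :
    (Fm.imp
        ((fun ψ => Fm.imp ψ (Fm.eq 0 0))^[n ^ ((n + 1) + Nat.factorial (n + 1) + 1)]
          (Fm.mem 0 (n + 1)))
        (Fm.mem ((n + 1) + Nat.factorial (n + 1)) 0)).Stratified ∧
    ¬ (Fm.imp
        ((fun ψ => Fm.imp ψ (Fm.eq 0 0))^[n ^ ((n + 1) + Nat.factorial (n + 1) + 1)]
          (Fm.mem 0 ((n + 1) + Nat.factorial (n + 1))))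
        (Fm.mem ((n + 1) + Nat.factorial (n + 1)) 0)).Stratified := by
  set K := (n + 1) + Nat.factorial (n + 1) with hK
  have hKne : K ≠ n + 1 := by
    have := Nat.factorial_pos (n+1); omega
  have hK0 : K ≠ 0 := by
    have := Nat.factorial_pos (n+1); omega
  constructor
  · refine ⟨fun x => if x = 0 then 0 else if x = n + 1 then 1 else -1, ?_, ?_⟩
    · intro p hp
      simp only [Fm.memPairs, memIter, Finset.mem_union, Finset.mem_singleton] at hp
      rcases hp with hp | hp <;> subst hp <;> simp [hKne, hK0]
    · intro p hp
      simp only [Fm.eqPairs, Finset.union_empty] at hp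
      have := eqIter _ _ hp
      simp only [Fm.eqPairs, Finset.empty_union, Finset.mem_singleton] at this
      subst this; rfl
  · rintro ⟨σ, hmem, -⟩
    have h1 : σ 0 = σ K - 1 := by
      apply hmem (0, K)
      simp [Fm.memPairs, memIter]
    have h2 : σ K = σ 0 - 1 := by
      apply hmem (K, 0)
      simp [Fm.memPairs, memIter]
    omega
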